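/- arXiv:1901.10568 — 2 statements merged into one kernel-verified Lean document; each statement's English description precedes it below -/
import Mathlib

section
/- Marginalization preserves log-concavity: if f(x, y) is a jointly log-concave function on ℝ^{m+n}, then g(x) = ∫ f(x, y) dy is log-concave on ℝ^m. In particular, in a state space model with jointly log-concave transition and emission densities, the marginal likelihood of future observations given the current state, x_t ↦ p(y_{≥t} | x_t), is log-concave. -/
open MeasureTheory

open Set
open scoped ENNReal NNReal Pointwise

namespace PLAux

/-- ENNReal-valued log-concavity (only mid-range coefficients). -/
def ELC {E : Type*} [AddCommGroup E] [Module ℝ E] (F : E → ℝ≥0∞) : Prop :=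
  ∀ (a b : E) (lam : ℝ), 0 < lam → lam < 1 →
    F a ^ lam * F b ^ (1 - lam) ≤ F (lam • a + (1 - lam) • b)

lemma rpow_comb_self (c : ℝ≥0∞) {lam : ℝ} (h0 : 0 < lam) (h1 : lam < 1) :
    c ^ lam * c ^ (1 - lam) = c := by
  rcases eq_or_ne c 0 with rfl | hc0
  · rw [ENNReal.zero_rpow_of_pos h0, zero_mul]
  rcases eq_or_ne c ⊤ with rfl | hct
  · rw [ENNReal.top_rpow_of_pos h0, ENNReal.top_rpow_of_pos (by linarith), ENNReal.top_mul_top]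
  · rw [← ENNReal.rpow_add _ _ hc0 hct]; norm_num

lemma le_geom_comb {c x y : ℝ≥0∞} {lam : ℝ} (h0 : 0 < lam) (h1 : lam < 1)
    (hx : c ≤ x) (hy : c ≤ y) : c ≤ x ^ lam * y ^ (1 - lam) :=
  calc c = c ^ lam * c ^ (1 - lam) := (rpow_comb_self c h0 h1).symm
  _ ≤ x ^ lam * y ^ (1 - lam) :=
    mul_le_mul' (ENNReal.rpow_le_rpow hx h0.le) (ENNReal.rpow_le_rpow hy (by linarith))

variable {E : Type*} [AddCommGroup E] [Module ℝ E]

lemma ELC.convex_superlevel {F : E → ℝ≥0∞} (hF : ELC F) (c : ℝ≥0∞) :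
    Convex ℝ {x | c ≤ F x} := by
  intro x hx y hy a b ha hb hab
  rcases eq_or_lt_of_le ha with rfl | ha'
  · have hb1 : b = 1 := by linarith
    subst hb1; simpa using hy
  rcases eq_or_lt_of_le hb with rfl | hb'
  · have ha1 : a = 1 := by linarith
    subst ha1; simpa using hx
  · have hb1 : b = 1 - a := by linarith
    subst hb1
    exact le_trans (le_geom_comb ha' (by linarith) hx hy) (hF x y a ha' (by linarith))

lemma ELC.convex_superlevel_lt {F : E → ℝ≥0∞} (hF : ELC F) (c : ℝ≥0∞) :
    Convex ℝ {x | c < F x} := by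
  intro x hx y hy a b ha hb hab
  rcases eq_or_lt_of_le ha with rfl | ha'
  · have hb1 : b = 1 := by linarith
    subst hb1; simpa using hy
  rcases eq_or_lt_of_le hb with rfl | hb'
  · have ha1 : a = 1 := by linarith
    subst ha1; simpa using hx
  · have hb1 : b = 1 - a := by linarith
    subst hb1
    have hmin : min (F x) (F y) ≤ F x ^ a * F y ^ (1 - a) :=
      le_geom_comb ha' (by linarith) (min_le_left _ _) (min_le_right _ _)
    exact lt_of_lt_of_le (lt_min hx hy)
      (le_trans hmin (hF x y a ha' (by linarith)))

lemma ELC.measurable {F : ℝ → ℝ≥0∞} (hF : ELC F) : Measurable F :=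
  measurable_of_Ioi fun c => ((hF.convex_superlevel_lt c).ordConnected).measurableSet

lemma ELC.aemeasurable {k : ℕ} {F : (Fin k → ℝ) → ℝ≥0∞} (hF : ELC F) :
    AEMeasurable F volume := by
  have hG : @Measurable (NullMeasurableSpace (Fin k → ℝ) volume) _ _ _ F := by
    apply measurable_of_Ioi
    intro c
    exact ((hF.convex_superlevel_lt c).nullMeasurableSet volume)
  exact NullMeasurable.aemeasurable hG

lemma ELC.section_right {F : E × ℝ → ℝ≥0∞} (hF : ELC F) (x : E) :
    ELC (fun t => F (x, t)) := by
  intro s u lam h0 h1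
  have hx : lam • x + (1 - lam) • x = x := by
    rw [← add_smul]; norm_num
  have h := hF (x, s) (x, u) lam h0 h1
  rw [Prod.smul_mk, Prod.smul_mk, Prod.mk_add_mk, hx] at h
  simpa [smul_eq_mul] using h


lemma bm_compact {K L : Set ℝ} (hK : IsCompact K) (hL : IsCompact L)
    (hKne : K.Nonempty) (hLne : L.Nonempty) :
    volume K + volume L ≤ volume (K + L) := by
  set p := sSup K with hp
  set q := sInf L with hq
  have hpK : p ∈ K := hK.sSup_mem hKne
  have hqL : q ∈ L := hL.sInf_mem hLne
  set U := (fun x : ℝ => x + q) '' K with hU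
  set V := (fun x : ℝ => p + x) '' L with hV
  have hUvol : volume U = volume K := by
    have : U = (fun x : ℝ => x + (-q)) ⁻¹' K := by
      ext x
      simp only [hU, mem_image, mem_preimage]
      constructor
      · rintro ⟨k, hk, rfl⟩; simpa using hk
      · intro hx; exact ⟨x + (-q), hx, by ring⟩
    rw [this, measure_preimage_add_right]
  have hVvol : volume V = volume L := by
    have : V = (fun x : ℝ => -p + x) ⁻¹' L := by
      ext x
      simp only [hV, mem_image, mem_preimage]
      constructor
      · rintro ⟨l, hl, rfl⟩; simpa using hl
      · intro hx; exact ⟨-p + x, by simpa using hx, by ring⟩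
    rw [this, measure_preimage_add]
  have hUV : U ∪ V ⊆ K + L := by
    rintro x (⟨k, hk, rfl⟩ | ⟨l, hl, rfl⟩)
    · exact Set.add_mem_add hk hqL
    · exact Set.add_mem_add hpK hl
  have hinter : U ∩ V ⊆ {p + q} := by
    rintro x ⟨⟨k, hk, rfl⟩, ⟨l, hl, hx⟩⟩
    have h1 : k ≤ p := le_csSup hK.bddAbove hk
    have h2 : q ≤ l := csInf_le hL.bddBelow hl
    have : k + q = p + l := hx.symm
    simp only [mem_singleton_iff]
    nlinarith
  have hmeasV : MeasurableSet V := (hL.image (continuous_add_left p)).measurableSet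
  have hinter0 : volume (U ∩ V) = 0 :=
    le_antisymm (le_trans (measure_mono hinter) (by simp)) zero_le
  calc volume K + volume L = volume U + volume V := by rw [hUvol, hVvol]
  _ = volume (U ∪ V) + volume (U ∩ V) := (measure_union_add_inter U hmeasV).symm
  _ = volume (U ∪ V) := by rw [hinter0, add_zero]
  _ ≤ volume (K + L) := measure_mono hUV

lemma volume_smul_real {r : ℝ} (hr : 0 ≤ r) (s : Set ℝ) :
    volume (r • s) = ENNReal.ofReal r * volume s := by
  rw [Measure.addHaar_smul]
  simp [abs_of_nonneg hr]

/-- 1-D Brunn–Minkowski type bound for convex sets. -/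
lemma bm_convex {A B C : Set ℝ} (hA : Convex ℝ A) (hB : Convex ℝ B)
    (hAne : A.Nonempty) (hBne : B.Nonempty) {lam : ℝ} (h0 : 0 < lam) (h1 : lam < 1)
    (hC : ∀ s ∈ A, ∀ u ∈ B, lam * s + (1 - lam) * u ∈ C) :
    ENNReal.ofReal lam * volume A + ENNReal.ofReal (1 - lam) * volume B ≤ volume C := by
  obtain ⟨a₀, ha₀⟩ := hAne
  obtain ⟨b₀, hb₀⟩ := hBne
  -- finite measure case first, stated as an auxiliary claim
  have main : ∀ A' B' : Set ℝ, Convex ℝ A' → Convex ℝ B' → a₀ ∈ A' → b₀ ∈ B' →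
      A' ⊆ A → B' ⊆ B → volume A' ≠ ⊤ → volume B' ≠ ⊤ →
      ENNReal.ofReal lam * volume A' + ENNReal.ofReal (1 - lam) * volume B' ≤ volume C := by
    intro A' B' hA' hB' ha₀' hb₀' hAA hBB hAfin hBfin
    rcases eq_or_ne (volume C) ⊤ with hCtop | hCtop
    · rw [hCtop]; exact le_top
    refine ENNReal.le_of_forall_pos_le_add fun ε hε _ => ?_
    have hε2 : ((ε : ℝ≥0∞) / 2) ≠ 0 := by
      simp [ENNReal.div_eq_zero_iff, hε.ne']
    obtain ⟨K, hKA, hKc, hKvol⟩ :=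
      (hA'.ordConnected.measurableSet).exists_isCompact_lt_add hAfin hε2
    obtain ⟨L, hLB, hLc, hLvol⟩ :=
      (hB'.ordConnected.measurableSet).exists_isCompact_lt_add hBfin hε2
    set K' := K ∪ {a₀} with hK'
    set L' := L ∪ {b₀} with hL'
    have hK'c : IsCompact K' := hKc.union isCompact_singleton
    have hL'c : IsCompact L' := hLc.union isCompact_singleton
    have hK'A : K' ⊆ A' := union_subset hKA (by simpa using ha₀')
    have hL'B : L' ⊆ B' := union_subset hLB (by simpa using hb₀')
    have hK'ne : K'.Nonempty := ⟨a₀, Or.inr rfl⟩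
    have hL'ne : L'.Nonempty := ⟨b₀, Or.inr rfl⟩
    have hsub : lam • K' + (1 - lam) • L' ⊆ C := by
      rintro x ⟨y, hy, z, hz, rfl⟩
      obtain ⟨k, hk, rfl⟩ := hy
      obtain ⟨l, hl, rfl⟩ := hz
      exact hC k (hAA (hK'A hk)) l (hBB (hL'B hl))
    have hbm := bm_compact (hK'c.smul lam) (hL'c.smul (1 - lam))
      (hK'ne.smul_set) (hL'ne.smul_set)
    rw [volume_smul_real h0.le, volume_smul_real (by linarith)] at hbm
    have key : ENNReal.ofReal lam * volume K' + ENNReal.ofReal (1 - lam) * volume L'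
        ≤ volume C := le_trans hbm (measure_mono hsub)
    have hKK' : volume K ≤ volume K' := measure_mono subset_union_left
    have hbound : ENNReal.ofReal lam * volume A' + ENNReal.ofReal (1 - lam) * volume B'
        ≤ (ENNReal.ofReal lam * volume K' + ENNReal.ofReal (1 - lam) * volume L')
          + ((ε : ℝ≥0∞) / 2 + (ε : ℝ≥0∞) / 2) := by
      have h1' : ENNReal.ofReal lam * volume A'
          ≤ ENNReal.ofReal lam * volume K' + (ε : ℝ≥0∞) / 2 := by
        calc ENNReal.ofReal lam * volume A'
            ≤ ENNReal.ofReal lam * (volume K' + (ε : ℝ≥0∞) / 2) :=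
              mul_le_mul_right (le_trans hKvol.le (add_le_add_left hKK' _)) _
        _ = ENNReal.ofReal lam * volume K' + ENNReal.ofReal lam * ((ε : ℝ≥0∞) / 2) := by
              rw [mul_add]
        _ ≤ ENNReal.ofReal lam * volume K' + (ε : ℝ≥0∞) / 2 := by
              gcongr
              exact mul_le_of_le_one_left zero_le (ENNReal.ofReal_le_one.2 h1.le)
      have h2' : ENNReal.ofReal (1 - lam) * volume B'
          ≤ ENNReal.ofReal (1 - lam) * volume L' + (ε : ℝ≥0∞) / 2 := by
        have hLL' : volume L ≤ volume L' := measure_mono subset_union_left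
        calc ENNReal.ofReal (1 - lam) * volume B'
            ≤ ENNReal.ofReal (1 - lam) * (volume L' + (ε : ℝ≥0∞) / 2) :=
              mul_le_mul_right (le_trans hLvol.le (add_le_add_left hLL' _)) _
        _ = ENNReal.ofReal (1 - lam) * volume L'
              + ENNReal.ofReal (1 - lam) * ((ε : ℝ≥0∞) / 2) := by rw [mul_add]
        _ ≤ ENNReal.ofReal (1 - lam) * volume L' + (ε : ℝ≥0∞) / 2 := by
              gcongr
              exact mul_le_of_le_one_left zero_le (ENNReal.ofReal_le_one.2 (by linarith))
      calc ENNReal.ofReal lam * volume A' + ENNReal.ofReal (1 - lam) * volume B'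
          ≤ (ENNReal.ofReal lam * volume K' + (ε : ℝ≥0∞) / 2)
            + (ENNReal.ofReal (1 - lam) * volume L' + (ε : ℝ≥0∞) / 2) := add_le_add h1' h2'
      _ = (ENNReal.ofReal lam * volume K' + ENNReal.ofReal (1 - lam) * volume L')
            + ((ε : ℝ≥0∞) / 2 + (ε : ℝ≥0∞) / 2) := by ring
    calc ENNReal.ofReal lam * volume A' + ENNReal.ofReal (1 - lam) * volume B'
        ≤ (ENNReal.ofReal lam * volume K' + ENNReal.ofReal (1 - lam) * volume L')
          + ((ε : ℝ≥0∞) / 2 + (ε : ℝ≥0∞) / 2) := hbound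
    _ ≤ volume C + (ε : ℝ≥0∞) := by
        rw [ENNReal.add_halves]
        exact add_le_add_left key _
  -- reduce to the finite case by exhaustion
  set An := fun n : ℕ => A ∩ Icc (a₀ - n) (a₀ + n) with hAn
  set Bn := fun n : ℕ => B ∩ Icc (b₀ - n) (b₀ + n) with hBn
  have hAnconv : ∀ n, Convex ℝ (An n) := fun n => hA.inter (convex_Icc _ _)
  have hBnconv : ∀ n, Convex ℝ (Bn n) := fun n => hB.inter (convex_Icc _ _)
  have hAnmem : ∀ n : ℕ, a₀ ∈ An n := fun n =>
    ⟨ha₀, by constructor <;> [linarith [Nat.cast_nonneg (α := ℝ) n]; linarith [Nat.cast_nonneg (α := ℝ) n]]⟩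
  have hBnmem : ∀ n : ℕ, b₀ ∈ Bn n := fun n =>
    ⟨hb₀, by constructor <;> [linarith [Nat.cast_nonneg (α := ℝ) n]; linarith [Nat.cast_nonneg (α := ℝ) n]]⟩
  have hAfin : ∀ n, volume (An n) ≠ ⊤ := fun n =>
    (lt_of_le_of_lt (measure_mono inter_subset_right) measure_Icc_lt_top).ne
  have hBfin : ∀ n, volume (Bn n) ≠ ⊤ := fun n =>
    (lt_of_le_of_lt (measure_mono inter_subset_right) measure_Icc_lt_top).ne
  have hAun : A = ⋃ n, An n := by
    ext x
    simp only [mem_iUnion, hAn, mem_inter_iff, mem_Icc]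
    constructor
    · intro hx
      obtain ⟨n, hn⟩ := exists_nat_ge |x - a₀|
      exact ⟨n, hx, by cases abs_le.1 hn with | intro h1 h2 => constructor <;> linarith⟩
    · rintro ⟨n, hx, _⟩; exact hx
  have hBun : B = ⋃ n, Bn n := by
    ext x
    simp only [mem_iUnion, hBn, mem_inter_iff, mem_Icc]
    constructor
    · intro hx
      obtain ⟨n, hn⟩ := exists_nat_ge |x - b₀|
      exact ⟨n, hx, by cases abs_le.1 hn with | intro h1 h2 => constructor <;> linarith⟩
    · rintro ⟨n, hx, _⟩; exact hx
  have hAmono : Monotone An := by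
    intro i j hij
    have h : (i:ℝ) ≤ j := Nat.cast_le.2 hij
    exact inter_subset_inter_right _ (Icc_subset_Icc (by linarith) (by linarith))
  have hBmono : Monotone Bn := by
    intro i j hij
    have h : (i:ℝ) ≤ j := Nat.cast_le.2 hij
    exact inter_subset_inter_right _ (Icc_subset_Icc (by linarith) (by linarith))
  have hAsup : volume A = ⨆ n, volume (An n) := by
    rw [hAun]; exact hAmono.directed_le.measure_iUnion
  have hBsup : volume B = ⨆ n, volume (Bn n) := by
    rw [hBun]; exact hBmono.directed_le.measure_iUnion
  rw [hAsup, hBsup, ENNReal.mul_iSup, ENNReal.mul_iSup]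
  rw [ENNReal.iSup_add_iSup]
  · exact iSup_le fun n => main (An n) (Bn n) (hAnconv n) (hBnconv n) (hAnmem n) (hBnmem n)
      inter_subset_left inter_subset_left (hAfin n) (hBfin n)
  · intro i j
    refine ⟨max i j, add_le_add ?_ ?_⟩
    · exact mul_le_mul_right (measure_mono (hAmono (le_max_left i j))) _
    · exact mul_le_mul_right (measure_mono (hBmono (le_max_right i j))) _


/-- Normalized core of the 1-D Prékopa–Leindler inequality. -/
lemma core_norm {F G h : ℝ → ℝ≥0∞} (hF : ELC F) (hG : ELC G) (hhm : Measurable h)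
    {lam : ℝ} (h0 : 0 < lam) (h1 : lam < 1)
    (hFle : ∀ s, F s ≤ 1) (hGle : ∀ u, G u ≤ 1)
    (hFsup : ∀ c : ℝ≥0∞, c < 1 → ∃ s, c ≤ F s) (hGsup : ∀ c : ℝ≥0∞, c < 1 → ∃ u, c ≤ G u)
    (hyp : ∀ s u, F s ^ lam * G u ^ (1 - lam) ≤ h (lam * s + (1 - lam) * u)) :
    ENNReal.ofReal lam * (∫⁻ s, F s) + ENNReal.ofReal (1 - lam) * (∫⁻ u, G u)
      ≤ ∫⁻ x, h x := by
  -- the case where h is infinite on a set of positive measure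
  rcases eq_or_ne (volume {x | h x = ⊤}) 0 with hfin | hinf
  swap
  · have htop : ∫⁻ x, h x = ⊤ := by
      have hms : MeasurableSet {x | h x = ⊤} := hhm (measurableSet_singleton ⊤)
      have : ∫⁻ x in {x | h x = ⊤}, h x ≤ ∫⁻ x, h x := setLIntegral_le_lintegral _ _
      have heq : ∫⁻ x in {x | h x = ⊤}, h x = ⊤ := by
        rw [setLIntegral_congr_fun hms (fun x hx => hx)]
        simp [hinf]
      rw [← top_le_iff]; rw [heq] at this; exact this
    rw [htop]; exact le_top
  -- real-valued versions
  set fr := fun s => (F s).toReal with hfr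
  set gr := fun u => (G u).toReal with hgr
  set hr := fun x => (h x).toReal with hhr
  have hFtop : ∀ s, F s ≠ ⊤ := fun s => (lt_of_le_of_lt (hFle s) (by norm_num)).ne
  have hGtop : ∀ u, G u ≠ ⊤ := fun u => (lt_of_le_of_lt (hGle u) (by norm_num)).ne
  have lcF : ∫⁻ s, F s = ∫⁻ t in Ioi (0:ℝ), volume {s | t ≤ fr s} := by
    have := lintegral_eq_lintegral_meas_le volume (f := fr)
      (ae_of_all _ fun s => ENNReal.toReal_nonneg)
      ((ENNReal.measurable_toReal.comp hF.measurable).aemeasurable)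
    rw [← this]
    congr 1; funext s; exact (ENNReal.ofReal_toReal (hFtop s)).symm
  have lcG : ∫⁻ u, G u = ∫⁻ t in Ioi (0:ℝ), volume {u | t ≤ gr u} := by
    have := lintegral_eq_lintegral_meas_le volume (f := gr)
      (ae_of_all _ fun u => ENNReal.toReal_nonneg)
      ((ENNReal.measurable_toReal.comp hG.measurable).aemeasurable)
    rw [← this]
    congr 1; funext u; exact (ENNReal.ofReal_toReal (hGtop u)).symm
  have lch : ∫⁻ t in Ioi (0:ℝ), volume {x | t ≤ hr x} ≤ ∫⁻ x, h x := by
    have heq := lintegral_eq_lintegral_meas_le volume (f := hr)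
      (ae_of_all _ fun x => ENNReal.toReal_nonneg)
      ((ENNReal.measurable_toReal.comp hhm).aemeasurable)
    rw [← heq]
    exact lintegral_mono fun x => ENNReal.ofReal_toReal_le
  -- pointwise-in-t inequality on (0,1)
  have key : ∀ t ∈ Ioo (0:ℝ) 1,
      ENNReal.ofReal lam * volume {s | t ≤ fr s} + ENNReal.ofReal (1 - lam) * volume {u | t ≤ gr u}
        ≤ volume {x | t ≤ hr x} := by
    rintro t ⟨ht0, ht1⟩
    have hAeq : {s | t ≤ fr s} = {s | ENNReal.ofReal t ≤ F s} := by
      ext s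
      simp only [mem_setOf_eq, hfr]
      exact (ENNReal.ofReal_le_iff_le_toReal (hFtop s)).symm
    have hBeq : {u | t ≤ gr u} = {u | ENNReal.ofReal t ≤ G u} := by
      ext u
      simp only [mem_setOf_eq, hgr]
      exact (ENNReal.ofReal_le_iff_le_toReal (hGtop u)).symm
    have hto : ENNReal.ofReal t < 1 := by
      rw [← ENNReal.ofReal_one]
      exact ENNReal.ofReal_lt_ofReal_iff_of_nonneg ht0.le |>.2 ht1
    obtain ⟨s₀, hs₀⟩ := hFsup _ hto
    obtain ⟨u₀, hu₀⟩ := hGsup _ hto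
    set D := {x | ENNReal.ofReal t ≤ h x} with hD
    have hbm := bm_convex (hF.convex_superlevel (ENNReal.ofReal t))
      (hG.convex_superlevel (ENNReal.ofReal t)) ⟨s₀, hs₀⟩ ⟨u₀, hu₀⟩ h0 h1
      (C := D) (fun s hs u hu => le_trans (le_geom_comb h0 h1 hs hu) (hyp s u))
    have hDsub : D \ {x | h x = ⊤} ⊆ {x | t ≤ hr x} := by
      rintro x ⟨hx1, hx2⟩
      exact (ENNReal.ofReal_le_iff_le_toReal hx2).1 hx1
    have hvolD : volume D ≤ volume {x | t ≤ hr x} := by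
      calc volume D ≤ volume (D \ {x | h x = ⊤}) + volume {x | h x = ⊤} :=
            le_trans (measure_mono (subset_diff_union _ _)) (measure_union_le _ _)
      _ = volume (D \ {x | h x = ⊤}) := by rw [hfin, add_zero]
      _ ≤ volume {x | t ≤ hr x} := measure_mono hDsub
    rw [hAeq, hBeq]
    exact le_trans hbm hvolD
  -- measurability in t
  have hmF : Measurable fun t : ℝ => volume {s | t ≤ fr s} :=
    Antitone.measurable fun t1 t2 h12 => measure_mono fun s hs => le_trans h12 hs
  have hmG : Measurable fun t : ℝ => volume {u | t ≤ gr u} :=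
    Antitone.measurable fun t1 t2 h12 => measure_mono fun u hu => le_trans h12 hu
  -- reduce the Ioi-integrals of F, G to Ioo 0 1
  have hdecomp : Ioi (0:ℝ) = Ioo 0 1 ∪ Ici 1 := by
    ext x
    simp only [mem_Ioi, mem_union, mem_Ioo, mem_Ici]
    constructor
    · intro hx; rcases lt_or_ge x 1 with hx1 | hx1
      · exact Or.inl ⟨hx, hx1⟩
      · exact Or.inr hx1
    · rintro (⟨hx, _⟩ | hx) <;> linarith
  have hdisj : Disjoint (Ioo (0:ℝ) 1) (Ici 1) := by
    rw [Set.disjoint_left]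
    rintro x ⟨_, hx1⟩ hx2
    exact absurd hx2 (not_le.2 hx1)
  have hsplit : ∀ (φ : ℝ → ℝ),  (∀ s, φ s ≤ 1) →
      (∫⁻ t in Ioi (0:ℝ), volume {s | t ≤ φ s}) = ∫⁻ t in Ioo (0:ℝ) 1, volume {s | t ≤ φ s} := by
    intro φ hφ
    rw [hdecomp, lintegral_union measurableSet_Ici hdisj]
    have hzero : ∫⁻ t in Ici (1:ℝ), volume {s | t ≤ φ s} = 0 := by
      rw [← Measure.restrict_congr_set Ioi_ae_eq_Ici]
      rw [setLIntegral_congr_fun measurableSet_Ioi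
        (fun t (ht : 1 < t) => ?_), lintegral_zero]
      have : {s | t ≤ φ s} = ∅ := by
        ext s; simp only [mem_setOf_eq, mem_empty_iff_false, iff_false, not_le]
        exact lt_of_le_of_lt (hφ s) ht
      rw [this, measure_empty]
    rw [hzero, add_zero]
  have hfr1 : ∀ s, fr s ≤ 1 := fun s => by
    rw [hfr]
    calc (F s).toReal ≤ (1:ℝ≥0∞).toReal := ENNReal.toReal_mono (by norm_num) (hFle s)
    _ = 1 := by simp
  have hgr1 : ∀ u, gr u ≤ 1 := fun u => by
    rw [hgr]
    calc (G u).toReal ≤ (1:ℝ≥0∞).toReal := ENNReal.toReal_mono (by norm_num) (hGle u)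
    _ = 1 := by simp
  rw [lcF, lcG, hsplit fr hfr1, hsplit gr hgr1]
  calc (ENNReal.ofReal lam * ∫⁻ t in Ioo (0:ℝ) 1, volume {s | t ≤ fr s})
      + ENNReal.ofReal (1 - lam) * (∫⁻ t in Ioo (0:ℝ) 1, volume {u | t ≤ gr u})
      = ∫⁻ t in Ioo (0:ℝ) 1, (ENNReal.ofReal lam * volume {s | t ≤ fr s}
          + ENNReal.ofReal (1 - lam) * volume {u | t ≤ gr u}) := by
        rw [lintegral_add_left (hmF.const_mul _), lintegral_const_mul' _ _ ENNReal.ofReal_ne_top,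
          lintegral_const_mul' _ _ ENNReal.ofReal_ne_top]
  _ ≤ ∫⁻ t in Ioo (0:ℝ) 1, volume {x | t ≤ hr x} := by
        apply setLIntegral_mono' measurableSet_Ioo key
  _ ≤ ∫⁻ t in Ioi (0:ℝ), volume {x | t ≤ hr x} :=
        lintegral_mono' (Measure.restrict_mono Ioo_subset_Ioi_self le_rfl) le_rfl
  _ ≤ ∫⁻ x, h x := lch


variable {E : Type*} [AddCommGroup E] [Module ℝ E]

lemma ELC.min_const {F : E → ℝ≥0∞} (hF : ELC F) (c : ℝ≥0∞) :
    ELC fun x => min (F x) c := by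
  intro a b lam h0 h1
  simp only
  refine le_min ?_ ?_
  · exact le_trans (mul_le_mul' (ENNReal.rpow_le_rpow (min_le_left _ _) h0.le)
      (ENNReal.rpow_le_rpow (min_le_left _ _) (by linarith))) (hF a b lam h0 h1)
  · calc (min (F a) c) ^ lam * (min (F b) c) ^ (1 - lam)
        ≤ c ^ lam * c ^ (1 - lam) := mul_le_mul' (ENNReal.rpow_le_rpow (min_le_right _ _) h0.le)
          (ENNReal.rpow_le_rpow (min_le_right _ _) (by linarith))
    _ = c := rpow_comb_self c h0 h1

lemma ELC.const_mul {F : E → ℝ≥0∞} (hF : ELC F) (c : ℝ≥0∞) :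
    ELC fun x => c * F x := by
  intro a b lam h0 h1
  simp only
  calc (c * F a) ^ lam * (c * F b) ^ (1 - lam)
      = (c ^ lam * c ^ (1 - lam)) * (F a ^ lam * F b ^ (1 - lam)) := by
        rw [ENNReal.mul_rpow_of_nonneg _ _ h0.le, ENNReal.mul_rpow_of_nonneg _ _ (by linarith : (0:ℝ) ≤ 1 - lam)]
        ring
  _ = c * (F a ^ lam * F b ^ (1 - lam)) := by rw [rpow_comb_self c h0 h1]
  _ ≤ c * F (lam • a + (1 - lam) • b) := mul_le_mul_right (hF a b lam h0 h1) c

lemma amgm2 {a b : ℝ≥0∞} {lam : ℝ} (h0 : 0 < lam) (h1 : lam < 1) :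
    a ^ lam * b ^ (1 - lam) ≤ ENNReal.ofReal lam * a + ENNReal.ofReal (1 - lam) * b := by
  have h0' : (0:ℝ) < 1 - lam := by linarith
  rcases eq_or_ne a ⊤ with rfl | ha
  · rw [ENNReal.top_rpow_of_pos h0]
    have hne : ENNReal.ofReal lam ≠ 0 := by
      simp only [ne_eq, ENNReal.ofReal_eq_zero, not_le]
      exact h0
    rw [ENNReal.mul_top hne, top_add]
    exact le_top
  rcases eq_or_ne b ⊤ with rfl | hb
  · rw [ENNReal.top_rpow_of_pos h0']
    have hne : ENNReal.ofReal (1 - lam) ≠ 0 := by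
      simp only [ne_eq, ENNReal.ofReal_eq_zero, not_le]
      exact h0'
    rw [ENNReal.mul_top hne, add_top]
    exact le_top
  · lift a to ℝ≥0 using ha
    lift b to ℝ≥0 using hb
    have key := NNReal.geom_mean_le_arith_mean2_weighted (w₁ := lam.toNNReal)
      (w₂ := (1 - lam).toNNReal) (p₁ := a) (p₂ := b) ?_
    · have hc1 : ((lam.toNNReal : ℝ)) = lam := Real.coe_toNNReal _ h0.le
      have hc2 : (((1 - lam).toNNReal : ℝ)) = 1 - lam := Real.coe_toNNReal _ h0'.le
      calc (a:ℝ≥0∞) ^ lam * (b:ℝ≥0∞) ^ (1 - lam)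
          = ((a ^ lam * b ^ (1 - lam) : ℝ≥0) : ℝ≥0∞) := by
            rw [ENNReal.coe_mul, ENNReal.coe_rpow_of_nonneg _ h0.le,
              ENNReal.coe_rpow_of_nonneg _ h0'.le]
      _ ≤ ((lam.toNNReal * a + (1 - lam).toNNReal * b : ℝ≥0) : ℝ≥0∞) := by
            apply ENNReal.coe_le_coe.2
            calc a ^ lam * b ^ (1 - lam) = a ^ ((lam.toNNReal : ℝ)) * b ^ (((1 - lam).toNNReal : ℝ)) := by
                  rw [hc1, hc2]
            _ ≤ _ := key
      _ = ENNReal.ofReal lam * a + ENNReal.ofReal (1 - lam) * b := by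
            rw [ENNReal.coe_add, ENNReal.coe_mul, ENNReal.coe_mul, ENNReal.ofReal, ENNReal.ofReal]
    · have : lam.toNNReal + (1 - lam).toNNReal = (1:ℝ).toNNReal := by
        rw [← Real.toNNReal_add h0.le h0'.le]
        norm_num
      simpa using this

lemma iSup_rpow_mono {a : ℕ → ℝ≥0∞} (ha : Monotone a) {p : ℝ} (hp : 0 < p) :
    (⨆ n, a n) ^ p = ⨆ n, a n ^ p := by
  have h1 : Filter.Tendsto a Filter.atTop (nhds (⨆ n, a n)) := tendsto_atTop_iSup ha
  have h2 : Filter.Tendsto (fun n => a n ^ p) Filter.atTop (nhds ((⨆ n, a n) ^ p)) :=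
    (ENNReal.continuous_rpow_const.tendsto _).comp h1
  have h3 : Filter.Tendsto (fun n => a n ^ p) Filter.atTop (nhds (⨆ n, a n ^ p)) :=
    tendsto_atTop_iSup fun i j hij => ENNReal.rpow_le_rpow (ha hij) hp.le
  exact tendsto_nhds_unique h2 h3

/-- The one-dimensional Prékopa–Leindler inequality for ENNReal-valued
log-concave functions. -/
lemma pl_dim_one {F G h : ℝ → ℝ≥0∞} (hF : ELC F) (hG : ELC G) (hh : ELC h)
    {lam : ℝ} (h0 : 0 < lam) (h1 : lam < 1)
    (hyp : ∀ s u, F s ^ lam * G u ^ (1 - lam) ≤ h (lam * s + (1 - lam) * u)) :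
    (∫⁻ s, F s) ^ lam * (∫⁻ u, G u) ^ (1 - lam) ≤ ∫⁻ x, h x := by
  have h0' : (0:ℝ) < 1 - lam := by linarith
  -- truncations
  set Fn := fun (n : ℕ) (s : ℝ) => min (F s) n with hFn
  set Gn := fun (n : ℕ) (u : ℝ) => min (G u) n with hGn
  have hFnELC : ∀ n, ELC (Fn n) := fun n => hF.min_const _
  have hGnELC : ∀ n, ELC (Gn n) := fun n => hG.min_const _
  -- main claim for each truncation level
  have claim : ∀ n : ℕ, (∫⁻ s, Fn n s) ^ lam * (∫⁻ u, Gn n u) ^ (1 - lam) ≤ ∫⁻ x, h x := by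
    intro n
    rcases eq_or_ne (∫⁻ s, Fn n s) 0 with hF0 | hF0
    · rw [hF0, ENNReal.zero_rpow_of_pos h0, zero_mul]; exact zero_le
    rcases eq_or_ne (∫⁻ u, Gn n u) 0 with hG0 | hG0
    · rw [hG0, ENNReal.zero_rpow_of_pos h0', mul_zero]; exact zero_le
    set MF := ⨆ s, Fn n s with hMF
    set MG := ⨆ u, Gn n u with hMG
    have hMFle : MF ≤ n := iSup_le fun s => min_le_right _ _
    have hMGle : MG ≤ n := iSup_le fun u => min_le_right _ _
    have hMFtop : MF ≠ ⊤ := (lt_of_le_of_lt hMFle (ENNReal.natCast_lt_top n)).ne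
    have hMGtop : MG ≠ ⊤ := (lt_of_le_of_lt hMGle (ENNReal.natCast_lt_top n)).ne
    have hMF0 : MF ≠ 0 := by
      intro hc
      apply hF0
      have : ∀ s, Fn n s = 0 := fun s => le_antisymm (hc ▸ le_iSup (Fn n) s) zero_le
      simp only [this, lintegral_zero]
    have hMG0 : MG ≠ 0 := by
      intro hc
      apply hG0
      have : ∀ u, Gn n u = 0 := fun u => le_antisymm (hc ▸ le_iSup (Gn n) u) zero_le
      simp only [this, lintegral_zero]
    -- normalized functions
    set F' := fun s => MF⁻¹ * Fn n s with hF'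
    set G' := fun u => MG⁻¹ * Gn n u with hG'
    set c : ℝ≥0∞ := (MF⁻¹) ^ lam * (MG⁻¹) ^ (1 - lam) with hc
    set h' := fun x => c * h x with hh'
    have hF'ELC : ELC F' := (hFnELC n).const_mul _
    have hG'ELC : ELC G' := (hGnELC n).const_mul _
    have hMFinv_top : MF⁻¹ ≠ ⊤ := by simp [ENNReal.inv_ne_top, hMF0]
    have hMGinv_top : MG⁻¹ ≠ ⊤ := by simp [ENNReal.inv_ne_top, hMG0]
    have hctop : c ≠ ⊤ := by
      apply ENNReal.mul_ne_top <;> exact ENNReal.rpow_ne_top_of_nonneg (by linarith) (by assumption)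
    have hF'le : ∀ s, F' s ≤ 1 := fun s => by
      rw [hF']
      calc MF⁻¹ * Fn n s ≤ MF⁻¹ * MF := mul_le_mul_right (le_iSup (Fn n) s) _
      _ = 1 := ENNReal.inv_mul_cancel hMF0 hMFtop
    have hG'le : ∀ u, G' u ≤ 1 := fun u => by
      rw [hG']
      calc MG⁻¹ * Gn n u ≤ MG⁻¹ * MG := mul_le_mul_right (le_iSup (Gn n) u) _
      _ = 1 := ENNReal.inv_mul_cancel hMG0 hMGtop
    have hF'sup : ∀ d : ℝ≥0∞, d < 1 → ∃ s, d ≤ F' s := by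
      intro d hd
      have : d * MF < MF := by
        conv_rhs => rw [← one_mul MF]
        exact (ENNReal.mul_lt_mul_iff_left hMF0 hMFtop).2 hd
      obtain ⟨s, hs⟩ := lt_iSup_iff.1 (lt_of_lt_of_le this le_rfl)
      refine ⟨s, ?_⟩
      calc d = d * MF * MF⁻¹ := by
            rw [mul_assoc, ENNReal.mul_inv_cancel hMF0 hMFtop, mul_one]
      _ ≤ Fn n s * MF⁻¹ := mul_le_mul_left hs.le _
      _ = MF⁻¹ * Fn n s := mul_comm _ _
    have hG'sup : ∀ d : ℝ≥0∞, d < 1 → ∃ u, d ≤ G' u := by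
      intro d hd
      have : d * MG < MG := by
        conv_rhs => rw [← one_mul MG]
        exact (ENNReal.mul_lt_mul_iff_left hMG0 hMGtop).2 hd
      obtain ⟨u, hu⟩ := lt_iSup_iff.1 (lt_of_lt_of_le this le_rfl)
      refine ⟨u, ?_⟩
      calc d = d * MG * MG⁻¹ := by
            rw [mul_assoc, ENNReal.mul_inv_cancel hMG0 hMGtop, mul_one]
      _ ≤ Gn n u * MG⁻¹ := mul_le_mul_left hu.le _
      _ = MG⁻¹ * Gn n u := mul_comm _ _
    have hyp' : ∀ s u, F' s ^ lam * G' u ^ (1 - lam) ≤ h' (lam * s + (1 - lam) * u) := by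
      intro s u
      calc F' s ^ lam * G' u ^ (1 - lam)
          = c * (Fn n s ^ lam * Gn n u ^ (1 - lam)) := by
            rw [hF', hG', ENNReal.mul_rpow_of_nonneg _ _ h0.le,
              ENNReal.mul_rpow_of_nonneg _ _ h0'.le, hc]
            ring
      _ ≤ c * (F s ^ lam * G u ^ (1 - lam)) := by
            apply mul_le_mul_right
            exact mul_le_mul' (ENNReal.rpow_le_rpow (min_le_left _ _) h0.le)
              (ENNReal.rpow_le_rpow (min_le_left _ _) h0'.le)
      _ ≤ c * h (lam * s + (1 - lam) * u) := mul_le_mul_right (hyp s u) _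
    have hcore := core_norm hF'ELC hG'ELC ((hh.measurable).const_mul c) h0 h1
      hF'le hG'le hF'sup hG'sup hyp'
    -- rewrite the integrals
    have hintF' : ∫⁻ s, F' s = MF⁻¹ * ∫⁻ s, Fn n s := by
      rw [hF']; exact lintegral_const_mul' _ _ hMFinv_top
    have hintG' : ∫⁻ u, G' u = MG⁻¹ * ∫⁻ u, Gn n u := by
      rw [hG']; exact lintegral_const_mul' _ _ hMGinv_top
    have hinth' : (∫⁻ x, h' x) = c * ∫⁻ x, h x := by
      rw [hh']; exact lintegral_const_mul' _ _ hctop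
    -- AM-GM step
    have hamgm : (∫⁻ s, F' s) ^ lam * (∫⁻ u, G' u) ^ (1 - lam) ≤ c * ∫⁻ x, h x := by
      refine le_trans (amgm2 h0 h1) ?_
      rw [← hinth']
      exact hcore
    -- unscale and conclude
    have hFn' : (∫⁻ s, Fn n s) = MF * ∫⁻ s, F' s := by
      rw [hintF', ← mul_assoc, ENNReal.mul_inv_cancel hMF0 hMFtop, one_mul]
    have hGn' : (∫⁻ u, Gn n u) = MG * ∫⁻ u, G' u := by
      rw [hintG', ← mul_assoc, ENNReal.mul_inv_cancel hMG0 hMGtop, one_mul]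
    calc (∫⁻ s, Fn n s) ^ lam * (∫⁻ u, Gn n u) ^ (1 - lam)
        = (MF ^ lam * MG ^ (1 - lam)) * ((∫⁻ s, F' s) ^ lam * (∫⁻ u, G' u) ^ (1 - lam)) := by
          rw [hFn', hGn', ENNReal.mul_rpow_of_nonneg _ _ h0.le,
            ENNReal.mul_rpow_of_nonneg _ _ h0'.le, mul_mul_mul_comm]
    _ ≤ (MF ^ lam * MG ^ (1 - lam)) * (c * ∫⁻ x, h x) := mul_le_mul_right hamgm _
    _ = ∫⁻ x, h x := by
          rw [hc]
          have e1 : MF ^ lam * MF⁻¹ ^ lam = 1 := by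
            rw [← ENNReal.mul_rpow_of_nonneg _ _ h0.le, ENNReal.mul_inv_cancel hMF0 hMFtop,
              ENNReal.one_rpow]
          calc MF ^ lam * MG ^ (1 - lam) * (MF⁻¹ ^ lam * MG⁻¹ ^ (1 - lam) * ∫⁻ x, h x)
              = (MF ^ lam * MF⁻¹ ^ lam) * ((MG ^ (1 - lam) * MG⁻¹ ^ (1 - lam)) * ∫⁻ x, h x) := by
                ring
          _ = ∫⁻ x, h x := by
                rw [e1, one_mul, ← ENNReal.mul_rpow_of_nonneg _ _ h0'.le,
                  ENNReal.mul_inv_cancel hMG0 hMGtop, ENNReal.one_rpow, one_mul]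
  -- monotone convergence in the truncation level
  have hFnm : ∀ n, Measurable (Fn n) := fun n => hF.measurable.min measurable_const
  have hGnm : ∀ n, Measurable (Gn n) := fun n => hG.measurable.min measurable_const
  have hFmono : Monotone Fn := fun i j hij s => min_le_min le_rfl (Nat.cast_le.2 hij)
  have hGmono : Monotone Gn := fun i j hij u => min_le_min le_rfl (Nat.cast_le.2 hij)
  have hsup_pt : ∀ (φ : ℝ → ℝ≥0∞) (s : ℝ), (⨆ n : ℕ, min (φ s) n) = φ s := by
    intro φ s
    apply le_antisymm (iSup_le fun n => min_le_left _ _)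
    rcases eq_or_ne (φ s) ⊤ with hs | hs
    · calc φ s = ⨆ n : ℕ, (n : ℝ≥0∞) := by rw [hs, ENNReal.iSup_natCast]
      _ ≤ ⨆ n : ℕ, min (φ s) n :=
          iSup_mono fun n => le_min (by rw [hs]; exact le_top) le_rfl
    · obtain ⟨n, hn⟩ := ENNReal.exists_nat_gt hs
      have heq : min (φ s) n = φ s := min_eq_left hn.le
      exact le_trans (le_of_eq heq.symm) (le_iSup (fun n : ℕ => min (φ s) (n : ℝ≥0∞)) n)
  have hintF : ∫⁻ s, F s = ⨆ n, ∫⁻ s, Fn n s := by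
    rw [← lintegral_iSup hFnm hFmono]
    congr 1; funext s; exact (hsup_pt F s).symm
  have hintG : ∫⁻ u, G u = ⨆ n, ∫⁻ u, Gn n u := by
    rw [← lintegral_iSup hGnm hGmono]
    congr 1; funext u; exact (hsup_pt G u).symm
  have hFint_mono : Monotone fun n => ∫⁻ s, Fn n s :=
    fun i j hij => lintegral_mono fun s => hFmono hij s
  have hGint_mono : Monotone fun n => ∫⁻ u, Gn n u :=
    fun i j hij => lintegral_mono fun u => hGmono hij u
  rw [hintF, hintG, iSup_rpow_mono hFint_mono h0, iSup_rpow_mono hGint_mono h0',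
    ENNReal.iSup_mul]
  apply iSup_le
  intro n1
  rw [ENNReal.mul_iSup]
  apply iSup_le
  intro n2
  calc (∫⁻ s, Fn n1 s) ^ lam * (∫⁻ u, Gn n2 u) ^ (1 - lam)
      ≤ (∫⁻ s, Fn (max n1 n2) s) ^ lam * (∫⁻ u, Gn (max n1 n2) u) ^ (1 - lam) :=
        mul_le_mul' (ENNReal.rpow_le_rpow (hFint_mono (le_max_left _ _)) h0.le)
          (ENNReal.rpow_le_rpow (hGint_mono (le_max_right _ _)) h0'.le)
  _ ≤ ∫⁻ x, h x := claim _


section Sections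

variable {E : Type*} [AddCommGroup E] [Module ℝ E]
variable {V : Type*} [AddCommGroup V] [Module ℝ V]

lemma ELC.section_fst {F : E × V → ℝ≥0∞} (hF : ELC F) (x : E) :
    ELC fun v => F (x, v) := by
  intro s u lam h0 h1
  have hx : lam • x + (1 - lam) • x = x := by
    rw [← add_smul]; norm_num
  have h := hF (x, s) (x, u) lam h0 h1
  rwa [Prod.smul_mk, Prod.smul_mk, Prod.mk_add_mk, hx] at h

/-- Marginalizing out a single real variable preserves ENNReal log-concavity. -/
lemma ELC.marginal_one {F : E × ℝ → ℝ≥0∞} (hF : ELC F) :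
    ELC fun x => ∫⁻ t, F (x, t) := by
  intro a b lam h0 h1
  have hsa : ELC fun t => F (a, t) := hF.section_fst a
  have hsb : ELC fun t => F (b, t) := hF.section_fst b
  have hsc : ELC fun t => F (lam • a + (1 - lam) • b, t) := hF.section_fst _
  refine pl_dim_one hsa hsb hsc h0 h1 fun s u => ?_
  have h := hF (a, s) (b, u) lam h0 h1
  rwa [Prod.smul_mk, Prod.smul_mk, Prod.mk_add_mk, smul_eq_mul, smul_eq_mul] at h

end Sections

universe u

lemma elc_marginal_pi : ∀ (n : ℕ) {E : Type u} [AddCommGroup E] [Module ℝ E]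
    (F : E × (Fin n → ℝ) → ℝ≥0∞), ELC F → ELC (fun x => ∫⁻ y, F (x, y)) := by
  intro n
  induction n with
  | zero =>
    intro E _ _ F hF
    have hvol : (volume : Measure (Fin 0 → ℝ)) univ = 1 := by
      rw [volume_pi, Measure.pi_univ]
      simp
    have heval : (fun x : E => ∫⁻ y, F (x, y)) = fun x => F (x, 0) := by
      funext x
      have : (fun y : Fin 0 → ℝ => F (x, y)) = fun _ => F (x, 0) :=
        funext fun y => by rw [Subsingleton.elim y 0]
      rw [this, lintegral_const, hvol, mul_one]
    rw [heval]
    intro a b lam h0 h1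
    have h := hF (a, 0) (b, 0) lam h0 h1
    rwa [Prod.smul_mk, Prod.smul_mk, Prod.mk_add_mk, smul_zero, smul_zero, add_zero] at h
  | succ n ih =>
    intro E _ _ F hF
    set e := MeasurableEquiv.piFinSuccAbove (fun _ : Fin (n + 1) => ℝ) 0 with he
    have hmp : MeasurePreserving e (volume : Measure (Fin (n+1) → ℝ))
        ((volume : Measure ℝ).prod (volume : Measure (Fin n → ℝ))) := by
      have h := measurePreserving_piFinSuccAbove (fun _ : Fin (n + 1) => (volume : Measure ℝ)) 0
      rw [volume_pi, volume_pi]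
      exact h
    -- linearity of insertion
    set ins : ℝ → (Fin n → ℝ) → (Fin (n+1) → ℝ) :=
      fun t y => Fin.insertNth (α := fun _ : Fin (n+1) => ℝ) 0 t y with hins
    have hlin : ∀ (c d : ℝ) (t u : ℝ) (y z : Fin n → ℝ),
        ins (c * t + d * u) (c • y + d • z) = c • ins t y + d • ins u z := by
      intro c d t u y z
      funext j
      refine Fin.succAboveCases 0 ?_ ?_ j
      · simp [hins, Fin.insertNth_apply_same]
      · intro j'
        simp [hins, Fin.insertNth_apply_succAbove]
    set H : (E × ℝ) × (Fin n → ℝ) → ℝ≥0∞ := fun p => F (p.1.1, e.symm (p.1.2, p.2)) with hH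
    have hsymm : ∀ (t : ℝ) (y : Fin n → ℝ), e.symm (t, y) = ins t y := fun t y => by
      rw [he, hins]
      rfl
    have hHelc : ELC H := by
      rintro ⟨⟨a, s⟩, y⟩ ⟨⟨b, u⟩, z⟩ lam h0 h1
      have h := hF (a, e.symm (s, y)) (b, e.symm (u, z)) lam h0 h1
      simp only [hH, Prod.smul_mk, Prod.mk_add_mk, smul_eq_mul]
      rw [hsymm, hsymm, hsymm, hlin]
      rw [Prod.smul_mk, Prod.smul_mk, Prod.mk_add_mk] at h
      rw [hsymm, hsymm] at h
      exact h
    have hsteps : ELC fun x : E => ∫⁻ t : ℝ, ∫⁻ y' : Fin n → ℝ, H ((x, t), y') := by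
      have h1 : ELC fun w : E × ℝ => ∫⁻ y', H (w, y') := ih H hHelc
      have h2 := ELC.marginal_one (F := fun w : E × ℝ => ∫⁻ y', H (w, y')) h1
      exact h2
    have hfinal : (fun x : E => ∫⁻ y, F (x, y))
        = fun x : E => ∫⁻ t : ℝ, ∫⁻ y' : Fin n → ℝ, H ((x, t), y') := by
      funext x
      have hsec : ELC fun y : Fin (n+1) → ℝ => F (x, y) := hF.section_fst x
      have hmeas : AEMeasurable (fun z : ℝ × (Fin n → ℝ) => F (x, e.symm z))
          ((volume : Measure ℝ).prod (volume : Measure (Fin n → ℝ))) :=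
        hsec.aemeasurable.comp_quasiMeasurePreserving
          (hmp.symm e).quasiMeasurePreserving
      have h1 : ∫⁻ y, F (x, y)
          = ∫⁻ z, F (x, e.symm z) ∂((volume : Measure ℝ).prod volume) := by
        rw [← hmp.lintegral_comp_emb e.measurableEmbedding (fun z => F (x, e.symm z))]
        simp
      rw [h1, lintegral_prod _ hmeas]
    rw [hfinal]
    exact hsteps


end PLAux

/-- A nonnegative function on a real vector space is log-concave if
`f(λa + (1−λ)b) ≥ f(a)^λ f(b)^{1−λ}` for all `a, b` and `λ ∈ [0,1]`. -/
def LogConcaveOn {E : Type*} [AddCommGroup E] [Module ℝ E] (f : E → ℝ) : Prop :=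
  (∀ x, 0 ≤ f x) ∧
    ∀ (a b : E) (lam : ℝ), 0 ≤ lam → lam ≤ 1 →
      f (lam • a + (1 - lam) • b) ≥ f a ^ lam * f b ^ (1 - lam)

/-- Marginalization preserves log-concavity: if `f(x, y)` is jointly log-concave on
`ℝ^{m+n}`, then `g(x) = ∫ f(x, y) dy` is log-concave on `ℝ^m`. -/
theorem logConcave_marginal {m n : ℕ}
    (f : EuclideanSpace ℝ (Fin m) × EuclideanSpace ℝ (Fin n) → ℝ)
    (hf : LogConcaveOn f)
    (hint : ∀ x : EuclideanSpace ℝ (Fin m), Integrable (fun y => f (x, y)) volume) :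
    LogConcaveOn (fun x : EuclideanSpace ℝ (Fin m) => ∫ y, f (x, y)) := by
  obtain ⟨hnn, hlc⟩ := hf
  constructor
  · intro x
    exact integral_nonneg fun y => hnn _
  intro a b lam hl0 hl1
  rcases eq_or_lt_of_le hl0 with heq | hl0'
  · subst heq
    simp [Real.rpow_zero, Real.rpow_one]
  rcases eq_or_lt_of_le hl1 with heq | hl1'
  · subst heq
    simp [Real.rpow_zero, Real.rpow_one]
  set e2 := (MeasurableEquiv.toLp 2 (Fin n → ℝ)).symm with he2
  set Fenn : EuclideanSpace ℝ (Fin m) × (Fin n → ℝ) → ℝ≥0∞ :=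
    fun p => ENNReal.ofReal (f (p.1, e2.symm p.2)) with hFenn
  have hsymm_lin : ∀ (c d : ℝ) (y z : Fin n → ℝ),
      e2.symm (c • y + d • z) = c • e2.symm y + d • e2.symm z := fun c d y z => rfl
  have hElc : PLAux.ELC Fenn := by
    rintro ⟨a', y⟩ ⟨b', z⟩ mu h0 h1
    simp only [hFenn, Prod.smul_mk, Prod.mk_add_mk]
    rw [hsymm_lin]
    have h := hlc (a', e2.symm y) (b', e2.symm z) mu h0.le (by linarith)
    calc ENNReal.ofReal (f (a', e2.symm y)) ^ mu * ENNReal.ofReal (f (b', e2.symm z)) ^ (1 - mu)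
        = ENNReal.ofReal (f (a', e2.symm y) ^ mu * f (b', e2.symm z) ^ (1 - mu)) := by
          rw [ENNReal.ofReal_mul (Real.rpow_nonneg (hnn _) _),
            ENNReal.ofReal_rpow_of_nonneg (hnn _) h0.le,
            ENNReal.ofReal_rpow_of_nonneg (hnn _) (by linarith)]
    _ ≤ _ := ENNReal.ofReal_le_ofReal h
  have hG := PLAux.elc_marginal_pi n Fenn hElc
  set G : EuclideanSpace ℝ (Fin m) → ℝ≥0∞ := fun x => ∫⁻ y, Fenn (x, y) with hGdef
  have hGeq : ∀ x, G x = ∫⁻ y, ENNReal.ofReal (f (x, y)) := by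
    intro x
    rw [hGdef]
    simp only [hFenn]
    rw [← (EuclideanSpace.volume_preserving_symm_measurableEquiv_toLp (Fin n)).lintegral_comp_emb
      (MeasurableEquiv.measurableEmbedding _) (fun z => ENNReal.ofReal (f (x, e2.symm z)))]
    simp [he2]
  have hGfin : ∀ x, G x ≠ ⊤ := fun x => by
    rw [hGeq]
    exact (Integrable.lintegral_lt_top (hint x)).ne
  have hgeq : ∀ x, (∫ y, f (x, y)) = (G x).toReal := by
    intro x
    rw [hGeq x, integral_eq_lintegral_of_nonneg_ae (ae_of_all _ fun y => hnn (x, y))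
      (hint x).aestronglyMeasurable]
  have hkey := hG a b lam hl0' hl1'
  rw [ge_iff_le]
  simp only
  rw [hgeq, hgeq, hgeq]
  calc (G a).toReal ^ lam * (G b).toReal ^ (1 - lam)
      = ((G a ^ lam * G b ^ (1 - lam)).toReal) := by
        rw [ENNReal.toReal_mul, ENNReal.toReal_rpow, ENNReal.toReal_rpow]
  _ ≤ (G (lam • a + (1 - lam) • b)).toReal := ENNReal.toReal_mono (hGfin _) hkey
end

section
/- For the stochastic volatility model with transition N(x_t | φ x_{t−1}, σ²), log-concave Gaussian-scale emissions, and stationary prior N(0, σ²/(1−φ²)) with |φ| < 1, the Lipschitz constant of the prior transition kernel is |φ|, and consequently the forward and backward smoothing kernels have Wasserstein Lipschitz constant at most |φ|. In particular the smoothing kernels are strict Wasserstein contractions when |φ| < 1. -/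
open MeasureTheory ProbabilityTheory
open scoped NNReal ENNReal

/-- The `p`-Wasserstein distance, defined as an infimum over couplings. -/
noncomputable def wassersteinP {E : Type*} [NormedAddCommGroup E] [MeasurableSpace E]
    (p : ℝ) (μ ν : Measure E) : ℝ :=
  sInf { c | ∃ π : Measure (E × E), IsProbabilityMeasure π ∧
      π.map Prod.fst = μ ∧ π.map Prod.snd = ν ∧
      c = (∫ z, ‖z.1 - z.2‖ ^ p ∂π) ^ (1 / p) }

section Helpers
open Real

lemma abs_rpow_le_exp (p t : ℝ) (hp : 0 ≤ p) : |t| ^ p ≤ Real.exp (p * |t|) := by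
  have h1 : |t| ≤ Real.exp |t| := le_trans (by linarith) (Real.add_one_le_exp |t|)
  calc |t| ^ p ≤ (Real.exp |t|) ^ p := Real.rpow_le_rpow (abs_nonneg t) h1 hp
    _ = Real.exp (p * |t|) := by
        rw [Real.rpow_def_of_pos (Real.exp_pos _), Real.log_exp, mul_comm]

lemma integrable_abs_rpow_gaussianReal (m : ℝ) {v : ℝ≥0} (hv : v ≠ 0) (p : ℝ) (hp : 0 ≤ p) :
    Integrable (fun x : ℝ => |x| ^ p) (gaussianReal m v) := by
  have hv0 : (0 : ℝ) < v := lt_of_le_of_ne v.coe_nonneg (by exact_mod_cast (Ne.symm hv))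
  rw [gaussianReal_of_var_ne_zero _ hv,
    integrable_withDensity_iff (measurable_gaussianPDF _ _)
      (ae_of_all _ fun x => ENNReal.ofReal_lt_top)]
  have heq : ∀ x : ℝ, (gaussianPDF m v x).toReal = gaussianPDFReal m v x := fun x =>
    ENNReal.toReal_ofReal (gaussianPDFReal_nonneg m v x)
  simp only [heq]
  set C : ℝ := (Real.sqrt (2 * π * v))⁻¹ * Real.exp (p * |m| + p ^ 2 * v) with hC
  have hbound : Integrable (fun x : ℝ => C * Real.exp (-(1 / (4 * v)) * (x - m) ^ 2)) := by
    exact (((integrable_exp_neg_mul_sq (by positivity : (0:ℝ) < 1 / (4 * v))).comp_sub_right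
      m).const_mul C)
  refine hbound.mono' ?_ (ae_of_all _ fun x => ?_)
  · exact ((continuous_abs.rpow_const (fun x => Or.inr hp)).measurable.mul
      (measurable_gaussianPDFReal m v)).aestronglyMeasurable
  · have hnn : 0 ≤ |x| ^ p * gaussianPDFReal m v x :=
      mul_nonneg (Real.rpow_nonneg (abs_nonneg x) p) (gaussianPDFReal_nonneg m v x)
    rw [Real.norm_eq_abs, abs_of_nonneg hnn]
    rw [gaussianPDFReal]
    have h1 : |x| ^ p ≤ Real.exp (p * |x - m| + p * |m|) := by
      refine (abs_rpow_le_exp p x hp).trans (Real.exp_le_exp.2 ?_)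
      have := abs_sub_abs_le_abs_sub x m
      nlinarith [abs_sub_abs_le_abs_sub x m, abs_nonneg (x - m), abs_nonneg m,
        abs_abs_sub_abs_le_abs_sub x m]
    have h2 : p * |x - m| ≤ (x - m) ^ 2 / (4 * v) + p ^ 2 * v := by
      have h4 : 4 * (v:ℝ) * (p * |x - m|) ≤ (x - m) ^ 2 + 4 * p ^ 2 * (v:ℝ) ^ 2 := by
        nlinarith [sq_nonneg (|x - m| - 2 * p * v), sq_abs (x - m)]
      have h5 : p * |x - m| = (4 * (v:ℝ) * (p * |x - m|)) / (4 * v) := by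
        field_simp
      rw [h5]
      rw [div_le_iff₀ (by positivity)]
      field_simp
      nlinarith [h4, hv0]
    have h3 : |x| ^ p ≤ Real.exp ((x - m) ^ 2 / (4 * v) + p ^ 2 * v + p * |m|) :=
      h1.trans (Real.exp_le_exp.2 (by linarith))
    have hKnn : (0:ℝ) ≤ (Real.sqrt (2 * π * v))⁻¹ := by positivity
    calc |x| ^ p * ((Real.sqrt (2 * π * v))⁻¹ * Real.exp (-(x - m) ^ 2 / (2 * v)))
        ≤ Real.exp ((x - m) ^ 2 / (4 * v) + p ^ 2 * v + p * |m|) *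
          ((Real.sqrt (2 * π * v))⁻¹ * Real.exp (-(x - m) ^ 2 / (2 * v))) := by
          apply mul_le_mul_of_nonneg_right h3
          positivity
      _ = C * Real.exp (-(1 / (4 * v)) * (x - m) ^ 2) := by
          have hexp : Real.exp ((x - m) ^ 2 / (4 * (v:ℝ)) + p ^ 2 * v + p * |m|) *
              Real.exp (-(x - m) ^ 2 / (2 * (v:ℝ))) =
              Real.exp (p * |m| + p ^ 2 * v) * Real.exp (-(1 / (4 * (v:ℝ))) * (x - m) ^ 2) := by
            rw [← Real.exp_add, ← Real.exp_add]
            congr 1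
            have : (v:ℝ) ≠ 0 := hv0.ne'
            field_simp
            ring
          calc Real.exp ((x - m) ^ 2 / (4 * (v:ℝ)) + p ^ 2 * v + p * |m|) *
              ((Real.sqrt (2 * π * v))⁻¹ * Real.exp (-(x - m) ^ 2 / (2 * (v:ℝ))))
              = (Real.sqrt (2 * π * v))⁻¹ * (Real.exp ((x - m) ^ 2 / (4 * (v:ℝ)) + p ^ 2 * v + p * |m|) *
                Real.exp (-(x - m) ^ 2 / (2 * (v:ℝ)))) := by ring
            _ = (Real.sqrt (2 * π * v))⁻¹ * (Real.exp (p * |m| + p ^ 2 * v) *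
                Real.exp (-(1 / (4 * (v:ℝ))) * (x - m) ^ 2)) := by rw [hexp]
            _ = C * Real.exp (-(1 / (4 * v)) * (x - m) ^ 2) := by rw [hC]; ring

lemma memℒp_id_gaussianReal (m : ℝ) {v : ℝ≥0} (hv : v ≠ 0) {p : ℝ} (hp : 1 ≤ p) :
    MemLp (id : ℝ → ℝ) (ENNReal.ofReal p) (gaussianReal m v) := by
  have hp0 : 0 < p := lt_of_lt_of_le one_pos hp
  have hpne : ENNReal.ofReal p ≠ 0 := by
    simp [ENNReal.ofReal_eq_zero, not_le, hp0]
  have hptop : ENNReal.ofReal p ≠ ∞ := ENNReal.ofReal_ne_top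
  have hint : Integrable (fun x : ℝ => ‖(id : ℝ → ℝ) x‖ ^ (ENNReal.ofReal p).toReal)
      (gaussianReal m v) := by
    simpa [Real.norm_eq_abs, ENNReal.toReal_ofReal hp0.le] using
      integrable_abs_rpow_gaussianReal m hv p hp0.le
  have h1 : MemLp (fun x : ℝ => ‖(id : ℝ → ℝ) x‖ ^ (ENNReal.ofReal p).toReal)
      (ENNReal.ofReal p / ENNReal.ofReal p) (gaussianReal m v) := by
    rw [ENNReal.div_self hpne hptop]
    exact memLp_one_iff_integrable.2 hint
  exact (memLp_norm_rpow_iff measurable_id.aestronglyMeasurable hpne hptop).1 h1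

lemma integrable_id_gaussianReal (m : ℝ) {v : ℝ≥0} (hv : v ≠ 0) :
    Integrable (id : ℝ → ℝ) (gaussianReal m v) := by
  have h := memℒp_id_gaussianReal m hv (le_refl (1:ℝ))
  rw [ENNReal.ofReal_one] at h
  exact memLp_one_iff_integrable.1 h

lemma integral_id_gaussianReal (m : ℝ) {v : ℝ≥0} (hv : v ≠ 0) :
    ∫ x, x ∂(gaussianReal m v) = m := by
  have h0 : ∫ x, x ∂(gaussianReal 0 v) = 0 := by
    have hmap : (gaussianReal 0 v).map (fun x => (-1 : ℝ) * x) = gaussianReal 0 v := by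
      rw [gaussianReal_map_const_mul (-1 : ℝ)]
      norm_num
    have h1 : ∫ x, x ∂(gaussianReal 0 v) = ∫ x, x ∂((gaussianReal 0 v).map (fun x => (-1:ℝ) * x)) := by
      rw [hmap]
    rw [integral_map (φ := fun x : ℝ => (-1:ℝ) * x) (f := fun x : ℝ => x)
      (measurable_const_mul (-1:ℝ)).aemeasurable measurable_id.aestronglyMeasurable] at h1
    simp only [neg_one_mul] at h1
    rw [integral_neg] at h1
    linarith
  have hmap : (gaussianReal 0 v).map (· + m) = gaussianReal m v := by
    rw [gaussianReal_map_add_const m, zero_add]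
  rw [← hmap, integral_map (φ := fun x : ℝ => x + m) (f := fun x : ℝ => x)
    (measurable_add_const m).aemeasurable measurable_id.aestronglyMeasurable]
  rw [integral_add (f := fun x : ℝ => x) (integrable_id_gaussianReal 0 hv) (integrable_const m)]
  simp [h0]

end Helpers

lemma wassersteinP_gaussian_eq (m1 m2 : ℝ) {v : ℝ≥0} (hv : v ≠ 0) {p : ℝ} (hp : 1 ≤ p) :
    wassersteinP p (gaussianReal m1 v) (gaussianReal m2 v) = |m1 - m2| := by
  have hp0 : (0:ℝ) < p := lt_of_lt_of_le one_pos hp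
  set Δ : ℝ := m1 - m2 with hΔ
  set S := { c | ∃ π : Measure (ℝ × ℝ), IsProbabilityMeasure π ∧
      π.map Prod.fst = gaussianReal m1 v ∧ π.map Prod.snd = gaussianReal m2 v ∧
      c = (∫ z, ‖z.1 - z.2‖ ^ p ∂π) ^ (1 / p) } with hS
  -- the shift coupling
  have hmem : |Δ| ∈ S := by
    refine ⟨(gaussianReal m1 v).map (fun a => (a, a - Δ)), ?_, ?_, ?_, ?_⟩
    · exact Measure.isProbabilityMeasure_map (by fun_prop)
    · rw [Measure.map_map measurable_fst (by fun_prop)]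
      have : (Prod.fst ∘ fun a : ℝ => (a, a - Δ)) = id := rfl
      rw [this, Measure.map_id]
    · rw [Measure.map_map measurable_snd (by fun_prop)]
      have : (Prod.snd ∘ fun a : ℝ => (a, a - Δ)) = fun a : ℝ => a + (-Δ) := by
        ext a; simp [sub_eq_add_neg]
      rw [this, gaussianReal_map_add_const (-Δ)]
      congr 1
      rw [hΔ]; ring
    · have hcont : Continuous fun z : ℝ × ℝ => ‖z.1 - z.2‖ ^ p :=
        (continuous_fst.sub continuous_snd).norm.rpow_const fun z => Or.inr hp0.le
      rw [integral_map (by fun_prop) hcont.aestronglyMeasurable]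
      simp only [sub_sub_cancel, Real.norm_eq_abs, integral_const, probReal_univ,
        ENNReal.toReal_one, one_smul]
      rw [← Real.rpow_mul (abs_nonneg Δ), mul_one_div, div_self hp0.ne', Real.rpow_one]
  have hlow : ∀ c ∈ S, |Δ| ≤ c := by
    rintro c ⟨π, hπ, hfst, hsnd, rfl⟩
    haveI := hπ
    have hpne : ENNReal.ofReal p ≠ 0 := by simp [ENNReal.ofReal_eq_zero, not_le, hp0]
    have hptop : ENNReal.ofReal p ≠ ∞ := ENNReal.ofReal_ne_top
    have hA : MemLp (fun z : ℝ × ℝ => z.1) (ENNReal.ofReal p) π := by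
      have h := memℒp_id_gaussianReal m1 hv hp
      rw [← hfst] at h
      exact (memLp_map_measure_iff measurable_id.aestronglyMeasurable
        measurable_fst.aemeasurable).1 h
    have hB : MemLp (fun z : ℝ × ℝ => z.2) (ENNReal.ofReal p) π := by
      have h := memℒp_id_gaussianReal m2 hv hp
      rw [← hsnd] at h
      exact (memLp_map_measure_iff measurable_id.aestronglyMeasurable
        measurable_snd.aemeasurable).1 h
    have hf : MemLp (fun z : ℝ × ℝ => z.1 - z.2) (ENNReal.ofReal p) π := hA.sub hB
    have h2 : Integrable (fun z : ℝ × ℝ => ‖z.1 - z.2‖ ^ p) π := by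
      have := hf.integrable_norm_rpow hpne hptop
      simpa [ENNReal.toReal_ofReal hp0.le] using this
    have hone : (1 : ENNReal) ≤ ENNReal.ofReal p := by
      rw [← ENNReal.ofReal_one]
      exact ENNReal.ofReal_le_ofReal hp
    have h1 : Integrable (fun z : ℝ × ℝ => z.1 - z.2) π := hf.integrable hone
    have hmean1 : ∫ z, z.1 ∂π = m1 := by
      have h := integral_id_gaussianReal m1 hv
      rw [← hfst, integral_map (φ := Prod.fst) (f := fun x : ℝ => x)
        measurable_fst.aemeasurable measurable_id.aestronglyMeasurable] at h
      exact h
    have hmean2 : ∫ z, z.2 ∂π = m2 := by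
      have h := integral_id_gaussianReal m2 hv
      rw [← hsnd, integral_map (φ := Prod.snd) (f := fun x : ℝ => x)
        measurable_snd.aemeasurable measurable_id.aestronglyMeasurable] at h
      exact h
    have hdiff : ∫ z, (z.1 - z.2) ∂π = Δ := by
      rw [integral_sub (hA.integrable hone) (hB.integrable hone), hmean1, hmean2]
    have habs : |Δ| ≤ ∫ z, ‖z.1 - z.2‖ ∂π := by
      calc |Δ| = ‖∫ z, (z.1 - z.2) ∂π‖ := by rw [hdiff, Real.norm_eq_abs]
        _ ≤ ∫ z, ‖z.1 - z.2‖ ∂π := norm_integral_le_integral_norm _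
    have hJ : (∫ z, ‖z.1 - z.2‖ ∂π) ^ p ≤ ∫ z, ‖z.1 - z.2‖ ^ p ∂π := by
      have hg : ConvexOn ℝ (Set.Ici (0:ℝ)) (fun t : ℝ => t ^ p) := convexOn_rpow hp
      have hgc : ContinuousOn (fun t : ℝ => t ^ p) (Set.Ici 0) :=
        continuousOn_id.rpow_const fun x _ => Or.inr hp0.le
      have := hg.map_average_le hgc isClosed_Ici
        (ae_of_all _ fun z => Set.mem_Ici.2 (norm_nonneg _)) h1.norm h2
      simpa [average_eq_integral] using this
    have hint_nonneg : (0:ℝ) ≤ ∫ z, ‖z.1 - z.2‖ ^ p ∂π :=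
      integral_nonneg fun z => Real.rpow_nonneg (norm_nonneg _) p
    have h6 : |Δ| ^ p ≤ ∫ z, ‖z.1 - z.2‖ ^ p ∂π :=
      le_trans (Real.rpow_le_rpow (abs_nonneg _) habs hp0.le) hJ
    calc |Δ| = (|Δ| ^ p) ^ (1/p) := by
          rw [← Real.rpow_mul (abs_nonneg Δ), mul_one_div, div_self hp0.ne', Real.rpow_one]
      _ ≤ (∫ z, ‖z.1 - z.2‖ ^ p ∂π) ^ (1/p) :=
          Real.rpow_le_rpow (Real.rpow_nonneg (abs_nonneg _) p) h6 (by positivity)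
  have hbdd : BddBelow S := ⟨0, fun c hc => by
    obtain ⟨π, hπ, -, -, rfl⟩ := hc
    exact Real.rpow_nonneg (integral_nonneg fun z => Real.rpow_nonneg (norm_nonneg _) p) _⟩
  exact le_antisymm (csInf_le hbdd hmem) (le_csInf ⟨|Δ|, hmem⟩ hlow)


/-- For the stochastic volatility model with transition `N(x_t | φ x_{t-1}, σ²)`, stationary
prior `N(0, σ²/(1-φ²))`, `|φ| < 1`, and log-concave emissions, the prior transition kernel has
Wasserstein Lipschitz constant `|φ|`; hence, by the Lipschitz Kernel Bound for log-concave
state space models (taken as the hypothesis `hLKB`), the forward and backward smoothing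
kernels `Ψf, Ψb` have Wasserstein Lipschitz constant at most `|φ|`, and are strict
contractions since `|φ| < 1`. -/
theorem svm_smoothing_kernels_contraction (σ : NNReal) (hσ : 0 < σ)
    (φ : ℝ) (hφ : |φ| < 1) (p : ℝ) (hp : 1 ≤ p)
    (Ψf Ψb : ℕ → ℝ → Measure ℝ)
    (hLKB : ∀ L : ℝ, 0 ≤ L →
      (∀ x x' : ℝ, wassersteinP p (gaussianReal (φ * x) (σ ^ 2))
          (gaussianReal (φ * x') (σ ^ 2)) ≤ L * |x - x'|) →
      ∀ (t : ℕ) (x x' : ℝ),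
        wassersteinP p (Ψf t x) (Ψf t x') ≤ L * |x - x'| ∧
        wassersteinP p (Ψb t x) (Ψb t x') ≤ L * |x - x'|) :
    (∀ x x' : ℝ, wassersteinP p (gaussianReal (φ * x) (σ ^ 2))
        (gaussianReal (φ * x') (σ ^ 2)) = |φ| * |x - x'|) ∧
    (∀ (t : ℕ) (x x' : ℝ),
        wassersteinP p (Ψf t x) (Ψf t x') ≤ |φ| * |x - x'| ∧
        wassersteinP p (Ψb t x) (Ψb t x') ≤ |φ| * |x - x'|) ∧
    |φ| < 1 := by
  have hv : (σ ^ 2 : NNReal) ≠ 0 := pow_ne_zero 2 hσ.ne'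
  have hpart1 : ∀ x x' : ℝ, wassersteinP p (gaussianReal (φ * x) (σ ^ 2))
      (gaussianReal (φ * x') (σ ^ 2)) = |φ| * |x - x'| := fun x x' => by
    rw [wassersteinP_gaussian_eq _ _ hv hp, ← mul_sub, abs_mul]
  exact ⟨hpart1, hLKB |φ| (abs_nonneg φ) fun x x' => le_of_eq (hpart1 x x'), hφ⟩
end
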